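/- Let n ≥ 1 and c < d. There exists λ₀ > 0 such that for every λ ∈ (0, λ₀) and every s ∈ [c,d] there is a strictly contractive invertible affine map f: ℝⁿ → ℝⁿ satisfying f(t, t², …, tⁿ) = (u, u², …, uⁿ) with u = λ(t − c) + s, for all t ∈ ℝ. In other words, the moment curve in ℝⁿ is invariant under affine maps realizing each orientation-preserving similarity t ↦ λ(t − c) + s of the parameter line, and these affine maps are contractions for λ small enough. -/

import Mathlib

open Set

/-- `f : ℝⁿ → ℝⁿ` is an invertible, strictly contractive affine map
(its linear part is bijective and has operator norm `< 1`). -/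
def IsAffineContraction {n : ℕ}
    (f : EuclideanSpace ℝ (Fin n) → EuclideanSpace ℝ (Fin n)) : Prop :=
  ∃ (T : EuclideanSpace ℝ (Fin n) →L[ℝ] EuclideanSpace ℝ (Fin n))
    (b : EuclideanSpace ℝ (Fin n)),
    Function.Bijective T ∧ ‖T‖ < 1 ∧ ∀ x, f x = T x + b

/-- `E ⊆ ℝⁿ` is self-affine: it is nonempty, compact and is the attractor of an
affine iterated function system. -/
def IsSelfAffine {n : ℕ} (E : Set (EuclideanSpace ℝ (Fin n))) : Prop :=
  E.Nonempty ∧ IsCompact E ∧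
    ∃ (ℓ : ℕ) (f : Fin ℓ → (EuclideanSpace ℝ (Fin n) → EuclideanSpace ℝ (Fin n))),
      (∀ i, IsAffineContraction (f i)) ∧ E = ⋃ i, f i '' E

/-- The moment curve `t ↦ (t, t², …, tⁿ)` in ℝⁿ. -/
def momentCurve (n : ℕ) (t : ℝ) : EuclideanSpace ℝ (Fin n) :=
  WithLp.toLp 2 (fun i : Fin n => t ^ ((i : ℕ) + 1))

lemma choose_le_two_pow' (m i : ℕ) : m.choose i ≤ 2 ^ m := by
  rcases le_or_gt i m with h | h
  · calc m.choose i ≤ ∑ j ∈ Finset.range (m+1), m.choose j :=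
        Finset.single_le_sum (fun _ _ => Nat.zero_le _) (Finset.mem_range.2 (by omega))
    _ = 2 ^ m := Nat.sum_range_choose m
  · simp [Nat.choose_eq_zero_of_lt h]

lemma binom_aux (x y : ℝ) (m : ℕ) :
    (x + y) ^ (m+1) = y ^ (m+1) + ∑ j ∈ Finset.range (m+1),
      (((m+1).choose (j+1) : ℕ) : ℝ) * x ^ (j+1) * y ^ (m-j) := by
  rw [add_pow, Finset.sum_range_succ']
  simp only [pow_zero, one_mul, Nat.choose_zero_right, Nat.cast_one, mul_one, Nat.sub_zero]
  rw [add_comm]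
  congr 1
  refine Finset.sum_congr rfl fun j hj => ?_
  have h : m + 1 - (j+1) = m - j := by omega
  rw [h]; ring

lemma l2_le_l1 {n : ℕ} (x : EuclideanSpace ℝ (Fin n)) : ‖x‖ ≤ ∑ i, |x i| := by
  rw [EuclideanSpace.norm_eq]
  have h := Finset.sum_sq_le_sq_sum_of_nonneg (s := Finset.univ)
    (f := fun i => |x i|) (fun i _ => abs_nonneg _)
  calc Real.sqrt (∑ i, ‖x i‖ ^ 2) ≤ Real.sqrt ((∑ i, |x i|) ^ 2) := by
        apply Real.sqrt_le_sqrt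
        simpa [Real.norm_eq_abs] using h
    _ = ∑ i, |x i| := Real.sqrt_sq (by positivity)

lemma coord_le_norm {n : ℕ} (x : EuclideanSpace ℝ (Fin n)) (j : Fin n) : |x j| ≤ ‖x‖ := by
  rw [EuclideanSpace.norm_eq]
  calc |x j| = Real.sqrt (|x j| ^ 2) := (Real.sqrt_sq (abs_nonneg _)).symm
    _ ≤ Real.sqrt (∑ i, ‖x i‖ ^ 2) := by
        apply Real.sqrt_le_sqrt
        refine Finset.single_le_sum (f := fun i => ‖x i‖^2) (fun i _ => by positivity)
          (Finset.mem_univ j) |>.trans_eq' ?_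
        simp [Real.norm_eq_abs]

/-- Let `n ≥ 1` and `c < d`.  There exists `λ₀ > 0` such that for
every `λ ∈ (0, λ₀)` and every `s ∈ [c,d]` there is a strictly contractive invertible
affine map `f : ℝⁿ → ℝⁿ` satisfying `f (t, t², …, tⁿ) = (u, u², …, uⁿ)` with
`u = λ (t − c) + s`, for all `t ∈ ℝ`. -/
theorem momentCurve_invariant_under_contractions
    (n : ℕ) (hn : 1 ≤ n) (c d : ℝ) (hcd : c < d) :
    ∃ lam₀ : ℝ, 0 < lam₀ ∧ ∀ lam ∈ Ioo 0 lam₀, ∀ s ∈ Icc c d,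
      ∃ f : EuclideanSpace ℝ (Fin n) → EuclideanSpace ℝ (Fin n),
        IsAffineContraction f ∧
        ∀ t : ℝ, f (momentCurve n t) = momentCurve n (lam * (t - c) + s) := by
  set B : ℝ := 1 + 2*|c| + |d| with hBdef
  have hB1 : (1:ℝ) ≤ B := by
    have := abs_nonneg c; have := abs_nonneg d; rw [hBdef]; linarith
  set K : ℝ := (n:ℝ)^2 * 2^n * B^n with hKdef
  have hK : 0 < K := by positivity
  refine ⟨min 1 (1/(2*K)), by positivity, ?_⟩
  rintro lam ⟨hlam0, hlam1⟩ s ⟨hs1, hs2⟩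
  have hl1 : lam ≤ 1 := le_of_lt (lt_of_lt_of_le hlam1 (min_le_left _ _))
  have hlK : K * lam < 1 := by
    have : lam < 1/(2*K) := lt_of_lt_of_le hlam1 (min_le_right _ _)
    calc K * lam < K * (1/(2*K)) := by
          exact mul_lt_mul_of_pos_left this hK
      _ = 1/2 := by field_simp
      _ < 1 := by norm_num
  set a : ℝ := s - lam * c with hadef
  have haB : |a| ≤ B := by
    have h1 : |s| ≤ |c| + |d| := by
      rw [abs_le]
      constructor
      · nlinarith [neg_abs_le c, abs_nonneg d]
      · nlinarith [le_abs_self d, abs_nonneg c]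
    have h2 : |lam * c| ≤ |c| := by
      rw [abs_mul, abs_of_pos hlam0]
      nlinarith [abs_nonneg c]
    calc |a| ≤ |s| + |lam * c| := abs_sub _ _
      _ ≤ (|c| + |d|) + |c| := add_le_add h1 h2
      _ ≤ B := by rw [hBdef]; nlinarith
  -- matrix entries
  set M : Fin n → Fin n → ℝ := fun k j =>
    if (j:ℕ) ≤ (k:ℕ) then
      ((((k:ℕ)+1).choose ((j:ℕ)+1) : ℕ) : ℝ) * lam^((j:ℕ)+1) * a^((k:ℕ)-(j:ℕ))
    else 0 with hMdef
  -- entry bound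
  have hE : ∀ k j, |M k j| ≤ 2^n * B^n * lam := by
    intro k j
    rw [hMdef]
    by_cases h : (j:ℕ) ≤ (k:ℕ)
    · simp only [h, if_pos]
      have hc : ((((k:ℕ)+1).choose ((j:ℕ)+1) : ℕ) : ℝ) ≤ 2^n := by
        calc ((((k:ℕ)+1).choose ((j:ℕ)+1) : ℕ) : ℝ) ≤ ((2^((k:ℕ)+1) : ℕ) : ℝ) := by
              exact_mod_cast choose_le_two_pow' _ _
          _ ≤ 2^n := by
              have : (k:ℕ)+1 ≤ n := k.2
              calc ((2^((k:ℕ)+1) : ℕ) : ℝ) = 2^((k:ℕ)+1) := by push_cast; ring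
                _ ≤ 2^n := pow_le_pow_right₀ one_le_two this
      have hlp : lam^((j:ℕ)+1) ≤ lam := by
        calc lam^((j:ℕ)+1) ≤ lam^1 :=
              pow_le_pow_of_le_one (le_of_lt hlam0) hl1 (by omega)
          _ = lam := pow_one lam
      have hap : |a|^((k:ℕ)-(j:ℕ)) ≤ B^n := by
        calc |a|^((k:ℕ)-(j:ℕ)) ≤ B^((k:ℕ)-(j:ℕ)) :=
              pow_le_pow_left₀ (abs_nonneg a) haB _
          _ ≤ B^n := pow_le_pow_right₀ hB1 (by omega)
      rw [abs_mul, abs_mul, abs_pow, abs_pow, abs_of_pos hlam0,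
        Nat.abs_cast]
      calc (((((k:ℕ)+1).choose ((j:ℕ)+1) : ℕ) : ℝ)) * lam^((j:ℕ)+1) * |a|^((k:ℕ)-(j:ℕ))
          ≤ 2^n * lam * B^n := by
            apply mul_le_mul ?_ hap (by positivity) (by positivity)
            apply mul_le_mul hc hlp (by positivity) (by positivity)
        _ = 2^n * B^n * lam := by ring
    · simp only [h, if_neg, not_false_iff, abs_zero]
      positivity
  -- the linear map
  set L : EuclideanSpace ℝ (Fin n) →ₗ[ℝ] EuclideanSpace ℝ (Fin n) :=
    { toFun := fun x => (WithLp.toLp 2 (fun k => ∑ j, M k j * x j) : EuclideanSpace ℝ (Fin n))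
      map_add' := by
        intro x y
        ext k
        show ∑ j, M k j * (x j + y j) = (∑ j, M k j * x j) + ∑ j, M k j * y j
        rw [← Finset.sum_add_distrib]
        exact Finset.sum_congr rfl fun j _ => by ring
      map_smul' := by
        intro r x
        ext k
        show ∑ j, M k j * (r * x j) = r * ∑ j, M k j * x j
        rw [Finset.mul_sum]
        exact Finset.sum_congr rfl fun j _ => by ring } with hLdef
  set T : EuclideanSpace ℝ (Fin n) →L[ℝ] EuclideanSpace ℝ (Fin n) :=
    LinearMap.toContinuousLinearMap L with hTdef
  have hTapp : ∀ x k, T x k = ∑ j, M k j * x j := fun x k => rfl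
  -- determinant nonzero
  have hdet : (Matrix.of M).det ≠ 0 := by
    have htri : (Matrix.of M).BlockTriangular OrderDual.toDual := by
      intro i j hij
      have : (j:ℕ) > (i:ℕ) := hij
      simp only [Matrix.of_apply, hMdef, if_neg (by omega : ¬ (j:ℕ) ≤ (i:ℕ))]
    rw [Matrix.det_of_lowerTriangular _ htri]
    apply Finset.prod_ne_zero_iff.2
    intro i _
    simp only [Matrix.of_apply, hMdef, if_pos le_rfl, Nat.choose_self, Nat.cast_one,
      Nat.sub_self, pow_zero, one_mul, mul_one]
    positivity
  -- bijectivity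
  have hinj : Function.Injective T := by
    intro x y hxy
    have h0 : L (x - y) = 0 := by
      have : L x = L y := hxy
      rw [map_sub, this, sub_self]
    have hmv : (Matrix.of M).mulVec (x - y).ofLp = 0 := by
      funext k
      exact congrArg (fun v : EuclideanSpace ℝ (Fin n) => v k) h0
    have := Matrix.eq_zero_of_mulVec_eq_zero hdet hmv
    exact sub_eq_zero.1 (by simpa using congrArg (WithLp.toLp 2) this)
  have hbij : Function.Bijective T := by
    refine ⟨hinj, ?_⟩
    have : Function.Surjective (T : EuclideanSpace ℝ (Fin n) →ₗ[ℝ] EuclideanSpace ℝ (Fin n)) :=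
      (LinearMap.injective_iff_surjective).1 hinj
    exact this
  -- norm bound
  have hnorm : ‖T‖ < 1 := by
    have hb : ‖T‖ ≤ K * lam := by
      apply ContinuousLinearMap.opNorm_le_bound _ (by positivity)
      intro x
      calc ‖T x‖ ≤ ∑ k, |T x k| := l2_le_l1 _
        _ ≤ ∑ k : Fin n, ∑ j : Fin n, (2^n * B^n * lam) * ‖x‖ := by
            apply Finset.sum_le_sum
            intro k _
            rw [hTapp]
            calc |∑ j, M k j * x j| ≤ ∑ j, |M k j * x j| := Finset.abs_sum_le_sum_abs _ _
              _ ≤ ∑ j : Fin n, (2^n * B^n * lam) * ‖x‖ := by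
                  apply Finset.sum_le_sum
                  intro j _
                  rw [abs_mul]
                  exact mul_le_mul (hE k j) (coord_le_norm x j) (abs_nonneg _) (by positivity)
        _ = K * lam * ‖x‖ := by
            simp [Finset.sum_const, hKdef]
            ring
    exact lt_of_le_of_lt hb hlK
  -- the affine map
  set b : EuclideanSpace ℝ (Fin n) := (WithLp.toLp 2 (fun k => a^((k:ℕ)+1)) : EuclideanSpace ℝ (Fin n)) with hbdef
  refine ⟨fun x => T x + b, ⟨T, b, hbij, hnorm, fun x => rfl⟩, ?_⟩
  intro t
  ext k
  show T (momentCurve n t) k + b k = (lam * (t - c) + s) ^ ((k:ℕ)+1)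
  have hu : lam * (t - c) + s = lam * t + a := by rw [hadef]; ring
  rw [hu, hTapp, binom_aux (lam*t) a (k:ℕ)]
  have hmc : ∀ j : Fin n, momentCurve n t j = t^((j:ℕ)+1) := fun j => rfl
  have hsum : ∑ j : Fin n, M k j * momentCurve n t j
      = ∑ j ∈ Finset.range ((k:ℕ)+1),
        ((((k:ℕ)+1).choose (j+1) : ℕ) : ℝ) * (lam*t)^(j+1) * a^((k:ℕ)-j) := by
    rw [show (∑ j : Fin n, M k j * momentCurve n t j)
        = ∑ j ∈ Finset.range n, (if j ≤ (k:ℕ) then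
            ((((k:ℕ)+1).choose (j+1) : ℕ) : ℝ) * lam^(j+1) * a^((k:ℕ)-j) else 0) * t^(j+1)
        from ?_]
    · rw [← Finset.sum_subset (Finset.range_subset_range.2 (by omega : (k:ℕ)+1 ≤ n))]
      · apply Finset.sum_congr rfl
        intro j hj
        have hjk : j ≤ (k:ℕ) := by
          have := Finset.mem_range.1 hj; omega
        rw [if_pos hjk, mul_pow]
        ring
      · intro j _ hj
        have : ¬ j ≤ (k:ℕ) := by
          have := Finset.mem_range.1 (by assumption : j ∈ Finset.range n)
          intro h; exact hj (Finset.mem_range.2 (by omega))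
        rw [if_neg this, zero_mul]
    · rw [← Fin.sum_univ_eq_sum_range
        (fun j => (if j ≤ (k:ℕ) then
          ((((k:ℕ)+1).choose (j+1) : ℕ) : ℝ) * lam^(j+1) * a^((k:ℕ)-j) else 0) * t^(j+1)) n]
      apply Finset.sum_congr rfl
      intro j _
      rw [hmc, hMdef]
  rw [hsum, hbdef]
  show _ + a^((k:ℕ)+1) = _
  ring
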